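/- (Bassalygo–Elias lemma) Let F be an alphabet of size q ≥ 2, let n ≥ 1, d ≥ 0, and let L be a nonempty subset of F^n. Then |L| · A_q(n,d) ≤ q^n · A_q(n,d;L). -/

import Mathlib

open Filter Real Set

/-- `C` is a code with minimum distance at least `d`. -/
def IsCode (q n d : ℕ) (C : Finset (Fin n → Fin q)) : Prop :=
  ∀ c ∈ C, ∀ c' ∈ C, c ≠ c' → d ≤ hammingDist c c'

/-- `A_q(n,d)`: maximum size of a code of length `n` and minimum distance at least `d`. -/
noncomputable def maxCodeSize (q n d : ℕ) : ℕ :=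
  sSup {M : ℕ | ∃ C : Finset (Fin n → Fin q), IsCode q n d C ∧ C.card = M}

/-- `A_q(n,d;L)`: maximum size of a code contained in `L` with minimum distance at least `d`. -/
noncomputable def maxCodeSizeIn (q n d : ℕ) (L : Finset (Fin n → Fin q)) : ℕ :=
  sSup {M : ℕ | ∃ C : Finset (Fin n → Fin q), C ⊆ L ∧ IsCode q n d C ∧ C.card = M}

/-- The Bassalygo-Elias lemma. -/
theorem stmt4 (q n d : ℕ) (hq : 2 ≤ q) (hn : 1 ≤ n)
    (L : Finset (Fin n → Fin q)) (hL : L.Nonempty) :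
    L.card * maxCodeSize q n d ≤ q ^ n * maxCodeSizeIn q n d L := by
  obtain ⟨m, rfl⟩ : ∃ m, q = m + 1 := ⟨q - 1, by omega⟩
  -- the set defining maxCodeSize is nonempty and bounded above; the sup is attained
  have hne : {M : ℕ | ∃ C : Finset (Fin n → Fin (m+1)), IsCode (m+1) n d C ∧ C.card = M}.Nonempty :=
    ⟨0, ∅, by intro c hc; simp at hc, rfl⟩
  have hbdd : BddAbove {M : ℕ | ∃ C : Finset (Fin n → Fin (m+1)), IsCode (m+1) n d C ∧ C.card = M} := by
    refine ⟨(m+1)^n, ?_⟩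
    rintro M ⟨C, -, rfl⟩
    calc C.card ≤ Fintype.card (Fin n → Fin (m+1)) := Finset.card_le_univ C
      _ = (m+1)^n := by simp [Fintype.card_fun]
  obtain ⟨C, hC, hCcard⟩ : ∃ C : Finset (Fin n → Fin (m+1)),
      IsCode (m+1) n d C ∧ C.card = maxCodeSize (m+1) n d :=
    Nat.sSup_mem hne hbdd
  -- translated codes intersected with L
  set D : (Fin n → Fin (m+1)) → Finset (Fin n → Fin (m+1)) :=
    fun v => L.filter (fun x => x - v ∈ C) with hD
  have hDsub : ∀ v, D v ⊆ L := fun v => Finset.filter_subset _ _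
  have hDcode : ∀ v, IsCode (m+1) n d (D v) := by
    intro v x hx y hy hxy
    rw [hD, Finset.mem_filter] at hx hy
    have hClose : hammingDist x y = hammingDist (x - v) (y - v) := by
      rw [hammingDist_eq_hammingNorm, hammingDist_eq_hammingNorm]; congr 1; abel
    rw [hClose]
    exact hC (x - v) hx.2 (y - v) hy.2 (by
      intro h
      exact hxy (sub_left_inj.mp h))
  have hbddIn : BddAbove {M : ℕ | ∃ C' : Finset (Fin n → Fin (m+1)),
      C' ⊆ L ∧ IsCode (m+1) n d C' ∧ C'.card = M} := by
    refine ⟨L.card, ?_⟩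
    rintro M ⟨C', hC', -, rfl⟩
    exact Finset.card_le_card hC'
  have hle : ∀ v, (D v).card ≤ maxCodeSizeIn (m+1) n d L := fun v =>
    le_csSup hbddIn ⟨D v, hDsub v, hDcode v, rfl⟩
  -- double counting
  have hsum : ∑ v : Fin n → Fin (m+1), (D v).card = L.card * C.card := by
    simp only [hD, Finset.card_filter]
    rw [Finset.sum_comm]
    have key : ∀ x ∈ L, (∑ v : Fin n → Fin (m+1), if x - v ∈ C then 1 else 0) = C.card := by
      intro x hx
      rw [← Finset.card_filter]
      refine Finset.card_bij' (fun v _ => x - v) (fun c _ => x - c) ?_ ?_ ?_ ?_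
      · intro v hv; rw [Finset.mem_filter] at hv; exact hv.2
      · intro c hc; simp [sub_sub_cancel, hc]
      · intro v hv; simp [sub_sub_cancel]
      · intro c hc; simp [sub_sub_cancel]
    rw [Finset.sum_congr rfl key, Finset.sum_const, smul_eq_mul]
  calc L.card * maxCodeSize (m+1) n d = ∑ v : Fin n → Fin (m+1), (D v).card := by
        rw [hsum, hCcard]
    _ ≤ ∑ _v : Fin n → Fin (m+1), maxCodeSizeIn (m+1) n d L :=
        Finset.sum_le_sum (fun v _ => hle v)
    _ = (m+1)^n * maxCodeSizeIn (m+1) n d L := by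
        rw [Finset.sum_const, smul_eq_mul, Finset.card_univ]
        simp [Fintype.card_fun]
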